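/- Let H : ℝ² → ℝ be C³, and let T⁺ and T⁻ be the triangles with vertices {(0,0),(2ε,0),(ε,√3ε)} and {(0,0),(2ε,0),(ε,-√3ε)} respectively. Then ε⁻² (∫_{T⁺} H dx₂dx₁ - ∫_{T⁻'} H dx₂dx₁), where the second integral is over the reflected region with the same orientation setup, equals ∫_0^{2ε} 3 c(x₁) H₂(x₁,0) dx₁ + O(ε³), where c(x₁) = (x₁/ε)² for x₁ ∈ [0,ε] and c(x₁) = ((2ε - x₁)/ε)² for x₁ ∈ [ε,2ε]. -/

import Mathlib

/-- Partial derivative in the second coordinate direction. -/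
noncomputable def pd2 (f : ℝ × ℝ → ℝ) (p : ℝ × ℝ) : ℝ := fderiv ℝ f p (0, 1)

open intervalIntegral MeasureTheory Set Interval

lemma taylor2_bound {ψ ψ₁ ψ₂ ψ₃ : ℝ → ℝ} {D y : ℝ} (hy : 0 ≤ y)
    (h1 : ∀ t, HasDerivAt ψ (ψ₁ t) t) (h2 : ∀ t, HasDerivAt ψ₁ (ψ₂ t) t)
    (h3 : ∀ t, HasDerivAt ψ₂ (ψ₃ t) t) (hc3 : Continuous ψ₃)
    (hD : ∀ t ∈ Set.Icc 0 y, |ψ₃ t| ≤ D) :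
    |ψ y - ψ 0 - y * ψ₁ 0 - y ^ 2 / 2 * ψ₂ 0| ≤ D * y ^ 3 / 6 := by
  have hc2 : Continuous ψ₂ :=
    continuous_iff_continuousAt.mpr fun t => (h3 t).differentiableAt.continuousAt
  have hc1 : Continuous ψ₁ :=
    continuous_iff_continuousAt.mpr fun t => (h2 t).differentiableAt.continuousAt
  have hD0 : 0 ≤ D := le_trans (abs_nonneg _) (hD 0 ⟨le_refl 0, hy⟩)
  have hsub : ∀ t ∈ Set.Icc (0:ℝ) y, Set.uIoc (0:ℝ) t ⊆ Set.Icc 0 y := by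
    intro t ht
    rw [Set.uIoc_of_le ht.1]
    exact fun u hu => ⟨le_of_lt hu.1, le_trans hu.2 ht.2⟩
  have s1 : ∀ t ∈ Set.Icc (0:ℝ) y, |ψ₂ t - ψ₂ 0| ≤ D * t := by
    intro t ht
    have heq : ∫ u in (0:ℝ)..t, ψ₃ u = ψ₂ t - ψ₂ 0 :=
      integral_eq_sub_of_hasDerivAt (fun u _ => h3 u) (hc3.intervalIntegrable 0 t)
    rw [← heq]
    calc |∫ u in (0:ℝ)..t, ψ₃ u| ≤ |∫ u in (0:ℝ)..t, D| := by
          have hb : ∀ᵐ u ∂(volume.restrict (Ι (0:ℝ) t)), ‖ψ₃ u‖ ≤ (fun _ : ℝ => D) u :=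
            (ae_restrict_mem measurableSet_uIoc).mono fun u hu => by
              simpa using hD u (hsub t ht hu)
          simpa using intervalIntegral.norm_integral_le_abs_of_norm_le hb intervalIntegrable_const
      _ = D * t := by
          rw [intervalIntegral.integral_const, smul_eq_mul, sub_zero,
            abs_of_nonneg (mul_nonneg ht.1 hD0), mul_comm]
  have s2 : ∀ t ∈ Set.Icc (0:ℝ) y, |ψ₁ t - ψ₁ 0 - t * ψ₂ 0| ≤ D / 2 * t ^ 2 := by
    intro t ht
    have hder : ∀ u : ℝ, HasDerivAt (fun u => ψ₁ u - ψ₁ 0 - u * ψ₂ 0) (ψ₂ u - ψ₂ 0) u :=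
      fun u => ((h2 u).sub_const _).sub (hasDerivAt_mul_const _)
    have heq : ∫ u in (0:ℝ)..t, (ψ₂ u - ψ₂ 0) = ψ₁ t - ψ₁ 0 - t * ψ₂ 0 := by
      rw [integral_eq_sub_of_hasDerivAt (fun u _ => hder u)
        ((hc2.sub continuous_const).intervalIntegrable 0 t)]
      ring
    rw [← heq]
    calc |∫ u in (0:ℝ)..t, (ψ₂ u - ψ₂ 0)| ≤ |∫ u in (0:ℝ)..t, D * u| := by
          have hb : ∀ᵐ u ∂(volume.restrict (Ι (0:ℝ) t)),
              ‖ψ₂ u - ψ₂ 0‖ ≤ (fun u : ℝ => D * u) u :=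
            (ae_restrict_mem measurableSet_uIoc).mono fun u hu => by
              simpa using s1 u (hsub t ht hu)
          simpa using intervalIntegral.norm_integral_le_abs_of_norm_le hb
            ((continuous_const.mul continuous_id).intervalIntegrable 0 t)
      _ = D / 2 * t ^ 2 := by
          have h1' : (∫ u in (0:ℝ)..t, u) = t ^ 2 / 2 := by rw [integral_id]; ring
          rw [intervalIntegral.integral_const_mul, h1',
            abs_of_nonneg (mul_nonneg hD0 (by positivity))]
          ring
  have hder : ∀ u : ℝ, HasDerivAt (fun u => ψ u - ψ 0 - u * ψ₁ 0 - u ^ 2 / 2 * ψ₂ 0)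
      (ψ₁ u - ψ₁ 0 - u * ψ₂ 0) u := by
    intro u
    have hp : HasDerivAt (fun u : ℝ => u ^ 2 / 2 * ψ₂ 0) (u * ψ₂ 0) u := by
      have := ((hasDerivAt_pow 2 u).div_const 2).mul_const (ψ₂ 0)
      refine this.congr_deriv ?_
      push_cast
      ring
    exact (((h1 u).sub_const _).sub (hasDerivAt_mul_const _)).sub hp
  have heq : ∫ u in (0:ℝ)..y, (ψ₁ u - ψ₁ 0 - u * ψ₂ 0)
      = ψ y - ψ 0 - y * ψ₁ 0 - y ^ 2 / 2 * ψ₂ 0 := by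
    rw [integral_eq_sub_of_hasDerivAt (fun u _ => hder u)
      (((hc1.sub continuous_const).sub (continuous_id.mul continuous_const)).intervalIntegrable 0 y)]
    ring
  rw [← heq]
  calc |∫ u in (0:ℝ)..y, (ψ₁ u - ψ₁ 0 - u * ψ₂ 0)|
      ≤ |∫ u in (0:ℝ)..y, D / 2 * u ^ 2| := by
        have hb : ∀ᵐ u ∂(volume.restrict (Ι (0:ℝ) y)),
            ‖ψ₁ u - ψ₁ 0 - u * ψ₂ 0‖ ≤ (fun u : ℝ => D / 2 * u ^ 2) u :=
          (ae_restrict_mem measurableSet_uIoc).mono fun u hu => by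
            simpa using s2 u (hsub y ⟨hy, le_refl y⟩ hu)
        simpa using intervalIntegral.norm_integral_le_abs_of_norm_le hb
          ((continuous_const.mul (continuous_pow 2)).intervalIntegrable 0 y)
    _ = D * y ^ 3 / 6 := by
        have h1' : (∫ u in (0:ℝ)..y, u ^ 2) = y ^ 3 / 3 := by
          rw [integral_pow]; norm_num
        rw [intervalIntegral.integral_const_mul, h1',
          abs_of_nonneg (mul_nonneg (by positivity) (by positivity))]
        ring

noncomputable instance : NormedAddCommGroup (ℝ × ℝ →L[ℝ] ℝ × ℝ →L[ℝ] ℝ) := inferInstance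

noncomputable instance : NormedSpace ℝ (ℝ × ℝ →L[ℝ] ℝ × ℝ →L[ℝ] ℝ) := inferInstance

lemma core_bound (H : ℝ × ℝ → ℝ) (hH : ContDiff ℝ 3 H) :
    ∃ K : ℝ, 0 ≤ K ∧ ∀ x ∈ Set.Icc (0:ℝ) 2, ∀ y ∈ Set.Icc (0:ℝ) 4,
      |H (x, y) - H (x, -y) - 2 * y * pd2 H (x, 0)| ≤ K * y ^ 3 := by
  have h1 : ContDiff ℝ 2 (fderiv ℝ H) := by
    rw [show (3 : WithTop ℕ∞) = 2 + 1 by norm_num] at hH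
    exact (contDiff_succ_iff_fderiv.mp hH).2.2
  have h2 : ContDiff ℝ 1 (fderiv ℝ (fderiv ℝ H)) := by
    rw [show (2 : WithTop ℕ∞) = 1 + 1 by norm_num] at h1
    exact (contDiff_succ_iff_fderiv.mp h1).2.2
  have hD3c : Continuous (fderiv ℝ (fderiv ℝ (fderiv ℝ H))) :=
    (contDiff_one_iff_fderiv.mp h2).2
  obtain ⟨M, hM⟩ := (isCompact_closedBall (0 : ℝ × ℝ) 10).exists_bound_of_continuousOn
    hD3c.continuousOn
  have hM0 : 0 ≤ M := le_trans (norm_nonneg _) (hM 0 (Metric.mem_closedBall_self (by norm_num)))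
  refine ⟨M / 3, by positivity, ?_⟩
  intro x hx y hy
  have key : ∀ c : ℝ, |c| = 1 →
      |H (x, c * y) - H (x, 0) - y * fderiv ℝ H (x, 0) (0, c)
        - y ^ 2 / 2 * fderiv ℝ (fderiv ℝ H) (x, 0) (0, c) (0, c)| ≤ M * y ^ 3 / 6 := by
    intro c hc
    have hγ : ∀ t : ℝ, HasDerivAt (fun t : ℝ => ((x, c * t) : ℝ × ℝ)) ((0 : ℝ), c) t := fun t =>
      HasDerivAt.prodMk (hasDerivAt_const t x) (by simpa using (hasDerivAt_id t).const_mul c)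
    have hd0 : ∀ t, HasDerivAt (fun t => H (x, c * t)) (fderiv ℝ H (x, c * t) (0, c)) t := fun t =>
      (hH.differentiable (by norm_num) (x, c * t)).hasFDerivAt.comp_hasDerivAt t (hγ t)
    have hd1 : ∀ t, HasDerivAt (fun t => fderiv ℝ H (x, c * t) (0, c))
        (fderiv ℝ (fderiv ℝ H) (x, c * t) (0, c) (0, c)) t := fun t => by
      have hD1 : HasDerivAt (fun t => fderiv ℝ H (x, c * t))
          (fderiv ℝ (fderiv ℝ H) (x, c * t) (0, c)) t :=
        (h1.differentiable (by norm_num) (x, c * t)).hasFDerivAt.comp_hasDerivAt t (hγ t)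
      simpa using hD1.clm_apply (hasDerivAt_const t ((0 : ℝ), c))
    have hd2 : ∀ t, HasDerivAt (fun t => fderiv ℝ (fderiv ℝ H) (x, c * t) (0, c) (0, c))
        (fderiv ℝ (fderiv ℝ (fderiv ℝ H)) (x, c * t) (0, c) (0, c) (0, c)) t := fun t => by
      have hD2 : HasDerivAt (fun t => fderiv ℝ (fderiv ℝ H) (x, c * t))
          (fderiv ℝ (fderiv ℝ (fderiv ℝ H)) (x, c * t) (0, c)) t :=
        (h2.differentiable (by norm_num) (x, c * t)).hasFDerivAt.comp_hasDerivAt t (hγ t)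
      simpa using (hD2.clm_apply (hasDerivAt_const t ((0 : ℝ), c))).clm_apply
        (hasDerivAt_const t ((0 : ℝ), c))
    have hnc : ‖((0 : ℝ), c)‖ = 1 := by simp [Prod.norm_def, hc]
    have hc3 : Continuous (fun t : ℝ =>
        fderiv ℝ (fderiv ℝ (fderiv ℝ H)) (x, c * t) (0, c) (0, c) (0, c)) := by
      have hγc : Continuous fun t : ℝ => ((x, c * t) : ℝ × ℝ) := by fun_prop
      exact (((hD3c.comp hγc).clm_apply continuous_const).clm_apply
        continuous_const).clm_apply continuous_const
    have hbd : ∀ t ∈ Set.Icc (0 : ℝ) y,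
        |fderiv ℝ (fderiv ℝ (fderiv ℝ H)) (x, c * t) (0, c) (0, c) (0, c)| ≤ M := by
      intro t ht
      have hmem : ((x, c * t) : ℝ × ℝ) ∈ Metric.closedBall (0 : ℝ × ℝ) 10 := by
        rw [Metric.mem_closedBall, dist_zero_right, Prod.norm_def]
        apply max_le
        · rw [Real.norm_eq_abs, abs_of_nonneg hx.1]; linarith [hx.2]
        · rw [Real.norm_eq_abs, abs_mul, hc, one_mul, abs_of_nonneg ht.1]
          linarith [ht.2, hy.2]
      set A := fderiv ℝ (fderiv ℝ (fderiv ℝ H)) (x, c * t) with hA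
      calc |A (0, c) (0, c) (0, c)|
          ≤ ‖A (0, c) (0, c)‖ := by
            simpa [hnc] using (A (0, c) (0, c)).le_opNorm ((0 : ℝ), c)
        _ ≤ ‖A (0, c)‖ := by
            simpa [hnc] using (A (0, c)).le_opNorm ((0 : ℝ), c)
        _ ≤ ‖A‖ := by
            simpa [hnc] using A.le_opNorm ((0 : ℝ), c)
        _ ≤ M := hM _ hmem
    have := taylor2_bound hy.1 hd0 hd1 hd2 hc3 hbd
    simpa [mul_zero] using this
  have k1 := key 1 (by norm_num)
  have k2 := key (-1) (by norm_num)
  have hv : ((0 : ℝ), (-1 : ℝ)) = -((0 : ℝ), (1 : ℝ)) := by simp [Prod.ext_iff]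
  simp only [hv, map_neg, ContinuousLinearMap.neg_apply, neg_neg] at k2
  rw [one_mul] at k1
  rw [neg_one_mul] at k2
  have htarget : H (x, y) - H (x, -y) - 2 * y * pd2 H (x, 0)
      = (H (x, y) - H (x, 0) - y * fderiv ℝ H (x, 0) (0, 1)
          - y ^ 2 / 2 * fderiv ℝ (fderiv ℝ H) (x, 0) (0, 1) (0, 1))
        - (H (x, -y) - H (x, 0) - y * -fderiv ℝ H (x, 0) (0, 1)
          - y ^ 2 / 2 * fderiv ℝ (fderiv ℝ H) (x, 0) (0, 1) (0, 1)) := by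
    unfold pd2; ring
  rw [htarget]
  have htri := abs_sub_le
    (H (x, y) - H (x, 0) - y * fderiv ℝ H (x, 0) (0, 1)
      - y ^ 2 / 2 * fderiv ℝ (fderiv ℝ H) (x, 0) (0, 1) (0, 1)) 0
    (H (x, -y) - H (x, 0) - y * -fderiv ℝ H (x, 0) (0, 1)
      - y ^ 2 / 2 * fderiv ℝ (fderiv ℝ H) (x, 0) (0, 1) (0, 1))
  simp only [sub_zero, zero_sub, abs_neg] at htri
  calc _ ≤ _ := htri
    _ ≤ M * y ^ 3 / 6 + M * y ^ 3 / 6 := add_le_add k1 k2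
    _ = M / 3 * y ^ 3 := by ring

/-- For a C³ function `H`, the rescaled difference of the integrals of `H` over the two
triangles `T⁺` (vertices `(0,0)`, `(2ε,0)`, `(ε,√3ε)`) and its reflection `T⁻`
(vertices `(0,0)`, `(2ε,0)`, `(ε,-√3ε)`) satisfies
`ε⁻² ∫∫ (H(x₁,x₂) - H(x₁,-x₂)) = ∫_0^{2ε} 3 c(x₁) H₂(x₁,0) dx₁ + O(ε³)`,
where `c(x₁) = (x₁/ε)²` on `[0,ε]` and `c(x₁) = ((2ε-x₁)/ε)²` on `[ε,2ε]`. -/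
theorem symmetric_triangle_difference
    (H : ℝ × ℝ → ℝ) (hH : ContDiff ℝ 3 H) :
    ∃ C : ℝ, ∀ ε : ℝ, 0 < ε → ε ≤ 1 →
      |(1 / ε ^ 2) *
            ((∫ x in (0 : ℝ)..ε, ∫ y in (0 : ℝ)..(Real.sqrt 3 * x),
                (H (x, y) - H (x, -y)))
              + ∫ x in ε..(2 * ε), ∫ y in (0 : ℝ)..(Real.sqrt 3 * (2 * ε - x)),
                (H (x, y) - H (x, -y)))
          - ∫ x in (0 : ℝ)..(2 * ε),
              3 * (if x ≤ ε then (x / ε) ^ 2 else ((2 * ε - x) / ε) ^ 2) * pd2 H (x, 0)|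
        ≤ C * ε ^ 3 := by
  obtain ⟨K, hK0, hK⟩ := core_bound H hH
  have hHc : Continuous H := hH.continuous
  have hD1cont : Continuous (fderiv ℝ H) := (hH.of_le (by norm_num)).continuous_fderiv one_ne_zero
  have hGc : Continuous (fun x : ℝ => pd2 H (x, 0)) := by
    unfold pd2
    exact (hD1cont.comp (by fun_prop)).clm_apply continuous_const
  have hs3 : Real.sqrt 3 ≤ 2 := by
    rw [show (2:ℝ) = Real.sqrt 4 by rw [show (4:ℝ) = 2^2 by norm_num, Real.sqrt_sq]; norm_num]
    exact Real.sqrt_le_sqrt (by norm_num)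
  have hs3' : 0 ≤ Real.sqrt 3 := Real.sqrt_nonneg 3
  -- inner integral estimate
  have inner : ∀ x ∈ Set.Icc (0:ℝ) 2, ∀ s : ℝ, 0 ≤ s → s ≤ 4 →
      |(∫ y in (0:ℝ)..s, (H (x, y) - H (x, -y))) - s ^ 2 * pd2 H (x, 0)| ≤ K * s ^ 4 / 4 := by
    intro x hx s hs0 hs4
    have hfc : Continuous fun y : ℝ => H (x, y) - H (x, -y) := by fun_prop
    have hgc : Continuous fun y : ℝ => 2 * y * pd2 H (x, 0) := by fun_prop
    have hP : ∫ y in (0:ℝ)..s, 2 * y * pd2 H (x, 0) = s ^ 2 * pd2 H (x, 0) := by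
      have e : (fun y : ℝ => 2 * y * pd2 H (x, 0))
          = fun y : ℝ => (2 * pd2 H (x, 0)) * y := by funext y; ring
      rw [e, intervalIntegral.integral_const_mul, integral_id]; ring
    rw [← hP, ← integral_sub (hfc.intervalIntegrable 0 s) (hgc.intervalIntegrable 0 s)]
    have hb : ∀ᵐ u ∂(volume.restrict (Ι (0:ℝ) s)),
        ‖H (x, u) - H (x, -u) - 2 * u * pd2 H (x, 0)‖ ≤ (fun u : ℝ => K * u ^ 3) u :=
      (ae_restrict_mem measurableSet_uIoc).mono fun u hu => by
        rw [Set.uIoc_of_le hs0] at hu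
        simpa using hK x hx u ⟨le_of_lt hu.1, le_trans hu.2 hs4⟩
    have hle := intervalIntegral.norm_integral_le_abs_of_norm_le hb
      ((continuous_const.mul (continuous_pow 3)).intervalIntegrable 0 s)
    have hint : |∫ u in (0:ℝ)..s, K * u ^ 3| = K * s ^ 4 / 4 := by
      have e : (∫ u in (0:ℝ)..s, u ^ 3) = s ^ 4 / 4 := by rw [integral_pow]; norm_num
      rw [intervalIntegral.integral_const_mul, e, abs_of_nonneg (by positivity)]; ring
    rw [hint] at hle
    exact hle
  refine ⟨9 * K / 10, ?_⟩
  intro ε hε hε1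
  have hεne : ε ≠ 0 := hε.ne'
  -- piece 1
  have hI1c : Continuous fun x : ℝ =>
      ∫ y in (0:ℝ)..(Real.sqrt 3 * x), (H (x, y) - H (x, -y)) := by
    apply continuous_parametric_intervalIntegral_of_continuous (μ := volume)
    · show Continuous fun p : ℝ × ℝ => H (p.1, p.2) - H (p.1, -p.2)
      fun_prop
    · fun_prop
  have hI2c : Continuous fun x : ℝ =>
      ∫ y in (0:ℝ)..(Real.sqrt 3 * (2 * ε - x)), (H (x, y) - H (x, -y)) := by
    apply continuous_parametric_intervalIntegral_of_continuous (μ := volume)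
    · show Continuous fun p : ℝ × ℝ => H (p.1, p.2) - H (p.1, -p.2)
      fun_prop
    · fun_prop
  have hf2c : Continuous fun x : ℝ => 3 * (x / ε) ^ 2 * pd2 H (x, 0) :=
    (continuous_const.mul ((continuous_id.div_const ε).pow 2)).mul hGc
  have hf3c : Continuous fun x : ℝ => 3 * ((2 * ε - x) / ε) ^ 2 * pd2 H (x, 0) :=
    (continuous_const.mul (((continuous_const.sub continuous_id).div_const ε).pow 2)).mul hGc
  have key1 : |(1 / ε ^ 2) * (∫ x in (0:ℝ)..ε, ∫ y in (0:ℝ)..(Real.sqrt 3 * x),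
        (H (x, y) - H (x, -y)))
      - ∫ x in (0:ℝ)..ε, 3 * (x / ε) ^ 2 * pd2 H (x, 0)| ≤ 9 * K / 20 * ε ^ 3 := by
    rw [← intervalIntegral.integral_const_mul, ← integral_sub
      (f := fun x => 1 / ε ^ 2 * ∫ y in (0:ℝ)..(Real.sqrt 3 * x), (H (x, y) - H (x, -y)))
      ((continuous_const.mul hI1c).intervalIntegrable 0 ε) (hf2c.intervalIntegrable 0 ε)]
    have hb : ∀ᵐ x ∂(volume.restrict (Ι (0:ℝ) ε)),
        ‖(1 / ε ^ 2) * (∫ y in (0:ℝ)..(Real.sqrt 3 * x), (H (x, y) - H (x, -y)))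
          - 3 * (x / ε) ^ 2 * pd2 H (x, 0)‖ ≤ (fun x : ℝ => 9 * K / (4 * ε ^ 2) * x ^ 4) x := by
      refine (ae_restrict_mem measurableSet_uIoc).mono fun x hx => ?_
      rw [Set.uIoc_of_le hε.le] at hx
      have hx0 : 0 ≤ x := hx.1.le
      have hxε : x ≤ ε := hx.2
      have hx2 : x ∈ Set.Icc (0:ℝ) 2 := ⟨hx0, by linarith⟩
      have hs0 : 0 ≤ Real.sqrt 3 * x := mul_nonneg hs3' hx0
      have hs4 : Real.sqrt 3 * x ≤ 4 := by nlinarith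
      have hin := inner x hx2 (Real.sqrt 3 * x) hs0 hs4
      have hsq : (Real.sqrt 3 * x) ^ 2 = 3 * x ^ 2 := by
        rw [mul_pow, Real.sq_sqrt (by norm_num : (3:ℝ) ≥ 0)]
      have e : (1 / ε ^ 2) * (∫ y in (0:ℝ)..(Real.sqrt 3 * x), (H (x, y) - H (x, -y)))
          - 3 * (x / ε) ^ 2 * pd2 H (x, 0)
          = (1 / ε ^ 2) * ((∫ y in (0:ℝ)..(Real.sqrt 3 * x), (H (x, y) - H (x, -y)))
            - (Real.sqrt 3 * x) ^ 2 * pd2 H (x, 0)) := by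
        rw [hsq]; field_simp
      rw [Real.norm_eq_abs, e, abs_mul, abs_of_pos (by positivity : (0:ℝ) < 1 / ε ^ 2)]
      have h4 : (Real.sqrt 3 * x) ^ 4 = 9 * x ^ 4 := by
        rw [show (4:ℕ) = 2 * 2 by norm_num, pow_mul, hsq]; ring
      calc (1 / ε ^ 2) * |(∫ y in (0:ℝ)..(Real.sqrt 3 * x), (H (x, y) - H (x, -y)))
            - (Real.sqrt 3 * x) ^ 2 * pd2 H (x, 0)|
          ≤ (1 / ε ^ 2) * (K * (Real.sqrt 3 * x) ^ 4 / 4) := by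
            exact mul_le_mul_of_nonneg_left hin (by positivity)
        _ = 9 * K / (4 * ε ^ 2) * x ^ 4 := by rw [h4]; field_simp
    have hle := intervalIntegral.norm_integral_le_abs_of_norm_le hb
      ((continuous_const.mul (continuous_pow 4)).intervalIntegrable 0 ε)
    have hint : |∫ x in (0:ℝ)..ε, 9 * K / (4 * ε ^ 2) * x ^ 4| = 9 * K / 20 * ε ^ 3 := by
      have e : (∫ x in (0:ℝ)..ε, x ^ 4) = ε ^ 5 / 5 := by rw [integral_pow]; norm_num
      rw [intervalIntegral.integral_const_mul, e, abs_of_nonneg (by positivity)]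
      field_simp; ring
    rw [hint] at hle
    exact hle
  have key2 : |(1 / ε ^ 2) * (∫ x in ε..(2 * ε), ∫ y in (0:ℝ)..(Real.sqrt 3 * (2 * ε - x)),
        (H (x, y) - H (x, -y)))
      - ∫ x in ε..(2 * ε), 3 * ((2 * ε - x) / ε) ^ 2 * pd2 H (x, 0)| ≤ 9 * K / 20 * ε ^ 3 := by
    rw [← intervalIntegral.integral_const_mul, ← integral_sub
      (f := fun x => 1 / ε ^ 2 * ∫ y in (0:ℝ)..(Real.sqrt 3 * (2 * ε - x)), (H (x, y) - H (x, -y)))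
      ((continuous_const.mul hI2c).intervalIntegrable ε (2 * ε)) (hf3c.intervalIntegrable ε (2 * ε))]
    have hb : ∀ᵐ x ∂(volume.restrict (Ι ε (2 * ε))),
        ‖(1 / ε ^ 2) * (∫ y in (0:ℝ)..(Real.sqrt 3 * (2 * ε - x)), (H (x, y) - H (x, -y)))
          - 3 * ((2 * ε - x) / ε) ^ 2 * pd2 H (x, 0)‖
          ≤ (fun x : ℝ => 9 * K / (4 * ε ^ 2) * (2 * ε - x) ^ 4) x := by
      refine (ae_restrict_mem measurableSet_uIoc).mono fun x hx => ?_
      rw [Set.uIoc_of_le (by linarith : ε ≤ 2 * ε)] at hx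
      have hx0 : 0 ≤ 2 * ε - x := by linarith [hx.2]
      have hx2 : x ∈ Set.Icc (0:ℝ) 2 := ⟨by linarith [hx.1.le], by linarith [hx.2]⟩
      have hs0 : 0 ≤ Real.sqrt 3 * (2 * ε - x) := mul_nonneg hs3' hx0
      have hs4 : Real.sqrt 3 * (2 * ε - x) ≤ 4 := by nlinarith [hx.1.le]
      have hin := inner x hx2 (Real.sqrt 3 * (2 * ε - x)) hs0 hs4
      have hsq : (Real.sqrt 3 * (2 * ε - x)) ^ 2 = 3 * (2 * ε - x) ^ 2 := by
        rw [mul_pow, Real.sq_sqrt (by norm_num : (3:ℝ) ≥ 0)]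
      have e : (1 / ε ^ 2) * (∫ y in (0:ℝ)..(Real.sqrt 3 * (2 * ε - x)), (H (x, y) - H (x, -y)))
          - 3 * ((2 * ε - x) / ε) ^ 2 * pd2 H (x, 0)
          = (1 / ε ^ 2) * ((∫ y in (0:ℝ)..(Real.sqrt 3 * (2 * ε - x)), (H (x, y) - H (x, -y)))
            - (Real.sqrt 3 * (2 * ε - x)) ^ 2 * pd2 H (x, 0)) := by
        rw [hsq]; field_simp
      rw [Real.norm_eq_abs, e, abs_mul, abs_of_pos (by positivity : (0:ℝ) < 1 / ε ^ 2)]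
      have h4 : (Real.sqrt 3 * (2 * ε - x)) ^ 4 = 9 * (2 * ε - x) ^ 4 := by
        rw [show (4:ℕ) = 2 * 2 by norm_num, pow_mul, hsq]; ring
      calc (1 / ε ^ 2) * |(∫ y in (0:ℝ)..(Real.sqrt 3 * (2 * ε - x)), (H (x, y) - H (x, -y)))
            - (Real.sqrt 3 * (2 * ε - x)) ^ 2 * pd2 H (x, 0)|
          ≤ (1 / ε ^ 2) * (K * (Real.sqrt 3 * (2 * ε - x)) ^ 4 / 4) :=
            mul_le_mul_of_nonneg_left hin (by positivity)
        _ = 9 * K / (4 * ε ^ 2) * (2 * ε - x) ^ 4 := by rw [h4]; field_simp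
    have hle := intervalIntegral.norm_integral_le_abs_of_norm_le hb
      ((continuous_const.mul ((continuous_const.sub continuous_id).pow 4)).intervalIntegrable ε (2 * ε))
    have hint : |∫ x in ε..(2 * ε), 9 * K / (4 * ε ^ 2) * (2 * ε - x) ^ 4|
        = 9 * K / 20 * ε ^ 3 := by
      have e0 : (∫ x in ε..(2 * ε), (2 * ε - x) ^ 4)
          = ∫ x in (2 * ε - 2 * ε)..(2 * ε - ε), x ^ 4 :=
        integral_comp_sub_left (fun u => u ^ 4) (2 * ε)
      have e : (∫ x in ε..(2 * ε), (2 * ε - x) ^ 4) = ε ^ 5 / 5 := by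
        rw [e0]
        norm_num [integral_pow]
        ring
      rw [intervalIntegral.integral_const_mul, e, abs_of_nonneg (by positivity)]
      field_simp; ring
    rw [hint] at hle
    exact hle
  -- split of the target integral
  have hJ : (∫ x in (0:ℝ)..(2 * ε),
        3 * (if x ≤ ε then (x / ε) ^ 2 else ((2 * ε - x) / ε) ^ 2) * pd2 H (x, 0))
      = (∫ x in (0:ℝ)..ε, 3 * (x / ε) ^ 2 * pd2 H (x, 0))
        + ∫ x in ε..(2 * ε), 3 * ((2 * ε - x) / ε) ^ 2 * pd2 H (x, 0) := by
    have heq1 : Set.EqOn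
        (fun x : ℝ => 3 * (if x ≤ ε then (x / ε) ^ 2 else ((2 * ε - x) / ε) ^ 2) * pd2 H (x, 0))
        (fun x : ℝ => 3 * (x / ε) ^ 2 * pd2 H (x, 0)) (Set.uIcc 0 ε) := by
      intro x hx
      rw [Set.uIcc_of_le hε.le] at hx
      simp only [if_pos hx.2]
    have heq2 : Set.EqOn
        (fun x : ℝ => 3 * (if x ≤ ε then (x / ε) ^ 2 else ((2 * ε - x) / ε) ^ 2) * pd2 H (x, 0))
        (fun x : ℝ => 3 * ((2 * ε - x) / ε) ^ 2 * pd2 H (x, 0)) (Set.uIcc ε (2 * ε)) := by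
      intro x hx
      rw [Set.uIcc_of_le (by linarith : ε ≤ 2 * ε)] at hx
      by_cases hxe : x ≤ ε
      · have hxε : x = ε := le_antisymm hxe hx.1
        subst hxε
        simp only [if_pos le_rfl]
        rw [show 2 * x - x = x by ring]
      · simp only [if_neg hxe]
    have hi1 : IntervalIntegrable
        (fun x : ℝ => 3 * (if x ≤ ε then (x / ε) ^ 2 else ((2 * ε - x) / ε) ^ 2) * pd2 H (x, 0))
        volume 0 ε := (hf2c.continuousOn.congr heq1).intervalIntegrable
    have hi2 : IntervalIntegrable
        (fun x : ℝ => 3 * (if x ≤ ε then (x / ε) ^ 2 else ((2 * ε - x) / ε) ^ 2) * pd2 H (x, 0))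
        volume ε (2 * ε) := (hf3c.continuousOn.congr heq2).intervalIntegrable
    rw [← integral_add_adjacent_intervals hi1 hi2,
      integral_congr heq1, integral_congr heq2]
  rw [hJ]
  have efin : (1 / ε ^ 2) *
        ((∫ x in (0:ℝ)..ε, ∫ y in (0:ℝ)..(Real.sqrt 3 * x), (H (x, y) - H (x, -y)))
          + ∫ x in ε..(2 * ε), ∫ y in (0:ℝ)..(Real.sqrt 3 * (2 * ε - x)), (H (x, y) - H (x, -y)))
      - ((∫ x in (0:ℝ)..ε, 3 * (x / ε) ^ 2 * pd2 H (x, 0))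
          + ∫ x in ε..(2 * ε), 3 * ((2 * ε - x) / ε) ^ 2 * pd2 H (x, 0))
      = ((1 / ε ^ 2) * (∫ x in (0:ℝ)..ε, ∫ y in (0:ℝ)..(Real.sqrt 3 * x),
            (H (x, y) - H (x, -y)))
          - ∫ x in (0:ℝ)..ε, 3 * (x / ε) ^ 2 * pd2 H (x, 0))
        + ((1 / ε ^ 2) * (∫ x in ε..(2 * ε), ∫ y in (0:ℝ)..(Real.sqrt 3 * (2 * ε - x)),
            (H (x, y) - H (x, -y)))
          - ∫ x in ε..(2 * ε), 3 * ((2 * ε - x) / ε) ^ 2 * pd2 H (x, 0)) := by ring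
  rw [efin]
  calc |_ + _| ≤ _ := abs_add_le _ _
    _ ≤ 9 * K / 20 * ε ^ 3 + 9 * K / 20 * ε ^ 3 := add_le_add key1 key2
    _ = 9 * K / 10 * ε ^ 3 := by ring
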